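/- Define ψ₃ : (0,π) × (0,π) → ℝ by ψ₃(x,y) = arccos(cos x · cos y). Then on (0,π) × (0,π): (i) ψ₃ is spacelike, i.e. (∂ψ₃/∂x)² + (∂ψ₃/∂y)² < 1; (ii) ψ₃ satisfies the maximal surface equation (1 − ψ_y²)ψ_xx + 2ψ_xψ_yψ_xy + (1 − ψ_x²)ψ_yy = 0; (iii) the graph of ψ₃ lies on the spacelike Scherk surface 𝒮₃, i.e. cos(ψ₃(x,y)) − cos x·cos y = 0. -/

import Mathlib

/-- Partial derivative in the first variable. -/
noncomputable def px (ψ : ℝ → ℝ → ℝ) (x y : ℝ) : ℝ := deriv (fun x' => ψ x' y) x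

/-- Partial derivative in the second variable. -/
noncomputable def py (ψ : ℝ → ℝ → ℝ) (x y : ℝ) : ℝ := deriv (fun y' => ψ x y') y

/-- The graphing function of one sheet of the spacelike Scherk surface
`𝒮₃ = {cos t - cos x cos y = 0}`. -/
noncomputable def ψ₃ (x y : ℝ) : ℝ := Real.arccos (Real.cos x * Real.cos y)

lemma ψ₃_comm (x y : ℝ) : ψ₃ x y = ψ₃ y x := by simp [ψ₃, mul_comm]

lemma q_pos {x y : ℝ} (h : Real.sin x ≠ 0 ∨ Real.sin y ≠ 0) :
    0 < 1 - (Real.cos x * Real.cos y) ^ 2 := by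
  have hx := Real.sin_sq_add_cos_sq x
  have hy := Real.sin_sq_add_cos_sq y
  rcases h with h | h
  · have : 0 < Real.sin x ^ 2 := by positivity
    nlinarith [sq_nonneg (Real.cos y), sq_nonneg (Real.sin x * Real.cos y)]
  · have : 0 < Real.sin y ^ 2 := by positivity
    nlinarith [sq_nonneg (Real.cos x), sq_nonneg (Real.sin y * Real.cos x)]

lemma hasDerivAt_ψ₃ {x y : ℝ} (h : Real.sin x ≠ 0 ∨ Real.sin y ≠ 0) :
    HasDerivAt (fun x' => ψ₃ x' y)
      (Real.sin x * Real.cos y / Real.sqrt (1 - (Real.cos x * Real.cos y) ^ 2)) x := by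
  have hq := q_pos h
  have habs : |Real.cos x * Real.cos y| < 1 :=
    (sq_lt_one_iff_abs_lt_one _).mp (by linarith)
  have h1 : Real.cos x * Real.cos y ≠ -1 := by
    intro hc; rw [hc] at habs; simp at habs
  have h2 : Real.cos x * Real.cos y ≠ 1 := by
    intro hc; rw [hc] at habs; simp at habs
  have hu : HasDerivAt (fun x' => Real.cos x' * Real.cos y) (-Real.sin x * Real.cos y) x :=
    (Real.hasDerivAt_cos x).mul_const _
  have key := (Real.hasDerivAt_arccos h1 h2).comp x hu
  have heq : (Real.arccos ∘ fun x' => Real.cos x' * Real.cos y) = fun x' => ψ₃ x' y := rfl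
  rw [heq] at key
  refine key.congr_deriv ?_
  field_simp

lemma px_eq {x y : ℝ} (h : Real.sin x ≠ 0 ∨ Real.sin y ≠ 0) :
    px ψ₃ x y = Real.sin x * Real.cos y / Real.sqrt (1 - (Real.cos x * Real.cos y) ^ 2) :=
  (hasDerivAt_ψ₃ h).deriv

lemma py_px (x y : ℝ) : py ψ₃ x y = px ψ₃ y x := by
  unfold px py
  congr 1
  funext y'
  exact ψ₃_comm x y'

lemma pyy_pxx (x y : ℝ) : py (py ψ₃) x y = px (px ψ₃) y x := by
  unfold px py
  congr 1
  funext y'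
  congr 1
  funext y''
  exact ψ₃_comm x y''

lemma pxx_eq {x y : ℝ} (hy : Real.sin y ≠ 0) :
    px (px ψ₃) x y =
      Real.cos x * Real.cos y * Real.sin y ^ 2 /
        Real.sqrt (1 - (Real.cos x * Real.cos y) ^ 2) ^ 3 := by
  have hfun : (fun x' => px ψ₃ x' y) =
      fun x' => Real.sin x' * Real.cos y / Real.sqrt (1 - (Real.cos x' * Real.cos y) ^ 2) :=
    funext fun x' => px_eq (Or.inr hy)
  show deriv (fun x' => px ψ₃ x' y) x = _
  rw [hfun]
  have hq := q_pos (x := x) (Or.inr hy)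
  set s := Real.sqrt (1 - (Real.cos x * Real.cos y) ^ 2) with hsdef
  have hspos : 0 < s := Real.sqrt_pos.mpr hq
  have hs2 : s ^ 2 = 1 - (Real.cos x * Real.cos y) ^ 2 := Real.sq_sqrt hq.le
  have hP : Real.sin x ^ 2 = 1 - Real.cos x ^ 2 := by
    have := Real.sin_sq_add_cos_sq x; linarith
  have hQ : Real.sin y ^ 2 = 1 - Real.cos y ^ 2 := by
    have := Real.sin_sq_add_cos_sq y; linarith
  have hu : HasDerivAt (fun x' => Real.cos x' * Real.cos y) (-Real.sin x * Real.cos y) x :=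
    (Real.hasDerivAt_cos x).mul_const _
  have hqd : HasDerivAt (fun x' => 1 - (Real.cos x' * Real.cos y) ^ 2)
      (2 * Real.sin x * Real.cos x * Real.cos y ^ 2) x := by
    have := (hu.pow 2).const_sub 1
    refine this.congr_deriv ?_
    ring
  have hsd := hqd.sqrt (ne_of_gt hq)
  have hnum : HasDerivAt (fun x' => Real.sin x' * Real.cos y) (Real.cos x * Real.cos y) x :=
    (Real.hasDerivAt_sin x).mul_const _
  have hdiv : HasDerivAt (fun x' => Real.sin x' * Real.cos y / Real.sqrt (1 - (Real.cos x' * Real.cos y) ^ 2)) _ x :=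
    hnum.div hsd (ne_of_gt hspos)
  rw [hdiv.deriv]
  rw [show (Real.cos x * Real.cos y * s - Real.sin x * Real.cos y *
        (2 * Real.sin x * Real.cos x * Real.cos y ^ 2 / (2 * s))) / s ^ 2
      = (Real.cos x * Real.cos y * s ^ 2 - Real.sin x ^ 2 * Real.cos x * Real.cos y ^ 3) / s ^ 3
      from by field_simp]
  congr 1
  linear_combination (Real.cos x * Real.cos y) * hs2
    - (Real.cos x * Real.cos y ^ 3) * hP - (Real.cos x * Real.cos y) * hQ

lemma pxy_eq {x y : ℝ} (hx : Real.sin x ≠ 0) :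
    py (px ψ₃) x y =
      -(Real.sin x * Real.sin y) /
        Real.sqrt (1 - (Real.cos x * Real.cos y) ^ 2) ^ 3 := by
  have hfun : (fun y' => px ψ₃ x y') =
      fun y' => Real.sin x * Real.cos y' / Real.sqrt (1 - (Real.cos x * Real.cos y') ^ 2) :=
    funext fun y' => px_eq (Or.inl hx)
  show deriv (fun y' => px ψ₃ x y') y = _
  rw [hfun]
  have hq := q_pos (y := y) (Or.inl hx)
  set s := Real.sqrt (1 - (Real.cos x * Real.cos y) ^ 2) with hsdef
  have hspos : 0 < s := Real.sqrt_pos.mpr hq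
  have hs2 : s ^ 2 = 1 - (Real.cos x * Real.cos y) ^ 2 := Real.sq_sqrt hq.le
  have hu : HasDerivAt (fun y' => Real.cos x * Real.cos y') (Real.cos x * -Real.sin y) y :=
    (Real.hasDerivAt_cos y).const_mul _
  have hqd : HasDerivAt (fun y' => 1 - (Real.cos x * Real.cos y') ^ 2)
      (2 * Real.cos x ^ 2 * Real.sin y * Real.cos y) y := by
    have := (hu.pow 2).const_sub 1
    refine this.congr_deriv ?_
    ring
  have hsd := hqd.sqrt (ne_of_gt hq)
  have hnum : HasDerivAt (fun y' => Real.sin x * Real.cos y') (Real.sin x * -Real.sin y) y :=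
    (Real.hasDerivAt_cos y).const_mul _
  have hdiv : HasDerivAt (fun y' => Real.sin x * Real.cos y' / Real.sqrt (1 - (Real.cos x * Real.cos y') ^ 2)) _ y :=
    hnum.div hsd (ne_of_gt hspos)
  rw [hdiv.deriv]
  rw [show (Real.sin x * -Real.sin y * s - Real.sin x * Real.cos y *
        (2 * Real.cos x ^ 2 * Real.sin y * Real.cos y / (2 * s))) / s ^ 2
      = (-(Real.sin x * Real.sin y) * s ^ 2
          - Real.sin x * Real.sin y * Real.cos x ^ 2 * Real.cos y ^ 2) / s ^ 3
      from by field_simp]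
  congr 1
  linear_combination (-(Real.sin x * Real.sin y)) * hs2

/-- On `(0, π) × (0, π)`, the function `ψ₃` is spacelike, satisfies the maximal
surface equation, and its graph lies on the spacelike Scherk surface `𝒮₃`. -/
theorem ψ₃_maximal_graph :
    ∀ x ∈ Set.Ioo (0 : ℝ) Real.pi, ∀ y ∈ Set.Ioo (0 : ℝ) Real.pi,
      (px ψ₃ x y) ^ 2 + (py ψ₃ x y) ^ 2 < 1 ∧
      (1 - (py ψ₃ x y) ^ 2) * px (px ψ₃) x y
        + 2 * px ψ₃ x y * py ψ₃ x y * py (px ψ₃) x y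
        + (1 - (px ψ₃ x y) ^ 2) * py (py ψ₃) x y = 0 ∧
      Real.cos (ψ₃ x y) - Real.cos x * Real.cos y = 0 := by
  intro x hx y hy
  have hsx : Real.sin x ≠ 0 := ne_of_gt (Real.sin_pos_of_pos_of_lt_pi hx.1 hx.2)
  have hsy : Real.sin y ≠ 0 := ne_of_gt (Real.sin_pos_of_pos_of_lt_pi hy.1 hy.2)
  have hq := q_pos (x := x) (y := y) (Or.inl hsx)
  have hcomm : Real.cos y * Real.cos x = Real.cos x * Real.cos y := mul_comm _ _
  set a := Real.cos x with ha
  set b := Real.cos y with hb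
  set p := Real.sin x with hp
  set q := Real.sin y with hqq
  have hP : p ^ 2 = 1 - a ^ 2 := by
    have := Real.sin_sq_add_cos_sq x; linarith
  have hQ : q ^ 2 = 1 - b ^ 2 := by
    have := Real.sin_sq_add_cos_sq y; linarith
  set s := Real.sqrt (1 - (a * b) ^ 2) with hs
  have hspos : 0 < s := Real.sqrt_pos.mpr hq
  have hs2 : s ^ 2 = 1 - (a * b) ^ 2 := Real.sq_sqrt hq.le
  have e1 : px ψ₃ x y = p * b / s := px_eq (Or.inl hsx)
  have e2 : py ψ₃ x y = a * q / s := by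
    rw [py_px, px_eq (Or.inl hsy), hcomm, mul_comm q a]
  have e3 : px (px ψ₃) x y = a * b * q ^ 2 / s ^ 3 := pxx_eq hsy
  have e4 : py (px ψ₃) x y = -(p * q) / s ^ 3 := pxy_eq hsx
  have e5 : py (py ψ₃) x y = a * b * p ^ 2 / s ^ 3 := by
    rw [pyy_pxx, pxx_eq hsx, hcomm]
  refine ⟨?_, ?_, ?_⟩
  · rw [e1, e2, div_pow, div_pow, ← add_div, div_lt_one (by positivity)]
    have hpq : 0 < p ^ 2 * q ^ 2 := by positivity
    have key : s ^ 2 - (p * b) ^ 2 - (a * q) ^ 2 = p ^ 2 * q ^ 2 := by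
      linear_combination hs2 + (-b ^ 2 - q ^ 2) * hP - hQ
    linarith
  · rw [e1, e2, e3, e4, e5]
    rw [show (1 - (a * q / s) ^ 2) * (a * b * q ^ 2 / s ^ 3)
          + 2 * (p * b / s) * (a * q / s) * (-(p * q) / s ^ 3)
          + (1 - (p * b / s) ^ 2) * (a * b * p ^ 2 / s ^ 3)
        = ((s ^ 2 - (a * q) ^ 2) * (a * b * q ^ 2) + 2 * (p * b) * (a * q) * (-(p * q))
            + (s ^ 2 - (p * b) ^ 2) * (a * b * p ^ 2)) / s ^ 5
        from by field_simp]
    rw [show (s ^ 2 - (a * q) ^ 2) * (a * b * q ^ 2) + 2 * (p * b) * (a * q) * (-(p * q))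
          + (s ^ 2 - (p * b) ^ 2) * (a * b * p ^ 2) = 0
        from by
          linear_combination (a * b * q ^ 2 + a * b * p ^ 2) * hs2
            + (-(a * b ^ 3 * p ^ 2) - 2 * a * b * q ^ 2 + a * b - a * b ^ 3) * hP
            + (-(a ^ 3 * b * q ^ 2) - a * b + a ^ 3 * b) * hQ]
    simp
  · have hc1 := Real.neg_one_le_cos x
    have hc2 := Real.cos_le_one x
    have hc3 := Real.neg_one_le_cos y
    have hc4 := Real.cos_le_one y
    have h1 : -1 ≤ a * b := by nlinarith
    have h2 : a * b ≤ 1 := by nlinarith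
    simp [ψ₃, ← ha, ← hb, Real.cos_arccos h1 h2]
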